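/- Let 0 < b < 1 and C ≠ 0, and let Ω(x) = C·x·(1-x²)^{(b-1)/2}·₂F₁((1-b)/2, b/2; 3/2; x²). Then Ω(x) → ±∞ as x → 1⁻ (the limit is infinite in absolute value); in particular Ω cannot have a finite nonzero limit at 1. -/

import Mathlib

open Real Set Filter Topology

/-- The Gaussian hypergeometric function ₂F₁(a,b;c;x) as a power series. -/
noncomputable def twoF1 (a b c x : ℝ) : ℝ :=
  ∑' n : ℕ, ((ascPochhammer ℝ n).eval a * (ascPochhammer ℝ n).eval b)
    / ((ascPochhammer ℝ n).eval c * (n.factorial : ℝ)) * x ^ n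

lemma twoF1_term_pos {a b c : ℝ} (ha : 0 < a) (hb : 0 < b) (hc : 0 < c)
    {y : ℝ} (hy : 0 < y) (n : ℕ) :
    0 < ((ascPochhammer ℝ n).eval a * (ascPochhammer ℝ n).eval b)
      / ((ascPochhammer ℝ n).eval c * (n.factorial : ℝ)) * y ^ n := by
  have h1 := ascPochhammer_pos n a ha
  have h2 := ascPochhammer_pos n b hb
  have h3 := ascPochhammer_pos n c hc
  have h4 : (0:ℝ) < (n.factorial : ℝ) := by positivity
  positivity

lemma twoF1_summable {a b c : ℝ} (ha : 0 < a) (hb : 0 < b) (hc : 0 < c)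
    {y : ℝ} (hy0 : 0 < y) (hy1 : y < 1) :
    Summable (fun n : ℕ => ((ascPochhammer ℝ n).eval a * (ascPochhammer ℝ n).eval b)
      / ((ascPochhammer ℝ n).eval c * (n.factorial : ℝ)) * y ^ n) := by
  set f : ℕ → ℝ := fun n => ((ascPochhammer ℝ n).eval a * (ascPochhammer ℝ n).eval b)
      / ((ascPochhammer ℝ n).eval c * (n.factorial : ℝ)) * y ^ n with hf
  have hpos : ∀ n, 0 < f n := fun n => twoF1_term_pos ha hb hc hy0 n
  apply summable_of_ratio_test_tendsto_lt_one hy1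
    (Eventually.of_forall fun n => (hpos n).ne')
  have key : ∀ n : ℕ, ‖f (n+1)‖ / ‖f n‖ = (a + n) * (b + n) / ((c + n) * (n + 1)) * y := by
    intro n
    have h1 := ascPochhammer_pos n a ha
    have h2 := ascPochhammer_pos n b hb
    have h3 := ascPochhammer_pos n c hc
    have h4 : (0:ℝ) < (n.factorial : ℝ) := by positivity
    have han : (0:ℝ) < a + n := by positivity
    have hbn : (0:ℝ) < b + n := by positivity
    have hcn : (0:ℝ) < c + n := by positivity
    have hyn : (0:ℝ) < y ^ n := pow_pos hy0 n
    rw [Real.norm_eq_abs, Real.norm_eq_abs, abs_of_pos (hpos _), abs_of_pos (hpos _), hf]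
    simp only [ascPochhammer_succ_eval, Nat.factorial_succ, Nat.cast_mul, pow_succ,
      Nat.cast_add, Nat.cast_one]
    field_simp
  rw [show (𝓝 y) = 𝓝 (1 * y) by rw [one_mul]]
  refine Tendsto.congr (fun n => (key n).symm) (Tendsto.mul_const y ?_)
  have base : ∀ d : ℝ, Tendsto (fun n : ℕ => d / n + 1) atTop (𝓝 1) := by
    intro d
    simpa [div_eq_mul_inv] using ((tendsto_natCast_atTop_atTop (R := ℝ)).inv_tendsto_atTop.const_mul d).add
      (tendsto_const_nhds (x := (1:ℝ)))
  have hdiv : Tendsto (fun n : ℕ => ((a/n + 1) * (b/n + 1)) / ((c/n + 1) * (1/n + 1)))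
      atTop (𝓝 1) := by
    have := (((base a).mul (base b)).div ((base c).mul (base 1)) (by norm_num))
    simpa [Pi.div_def] using this
  refine hdiv.congr' ?_
  filter_upwards [eventually_gt_atTop 0] with n hn
  have hn' : (0:ℝ) < (n:ℝ) := by exact_mod_cast hn
  have hcn : (0:ℝ) < c + n := by positivity
  field_simp
  ring_nf

lemma one_le_twoF1 {a b c : ℝ} (ha : 0 < a) (hb : 0 < b) (hc : 0 < c)
    {y : ℝ} (hy0 : 0 < y) (hy1 : y < 1) : 1 ≤ twoF1 a b c y := by
  have hs := twoF1_summable ha hb hc hy0 hy1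
  have h0 := hs.le_tsum 0 (fun i _ => (twoF1_term_pos ha hb hc hy0 i).le)
  simpa [twoF1, ascPochhammer_zero] using h0

theorem stmt_7 (b C : ℝ) (hb0 : 0 < b) (hb1 : b < 1) (hC : C ≠ 0) :
    Tendsto
      (fun x : ℝ => |C * x * (1 - x^2) ^ ((b-1)/2) * twoF1 ((1-b)/2) (b/2) (3/2) (x^2)|)
      (nhdsWithin 1 (Iio 1)) atTop := by
  have hCpos : 0 < |C| := abs_pos.mpr hC
  -- (1 - x^2) → 0⁺ within Iio 1
  have h1 : Tendsto (fun x : ℝ => 1 - x^2) (nhdsWithin 1 (Iio 1)) (nhdsWithin 0 (Ioi 0)) := by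
    apply tendsto_nhdsWithin_of_tendsto_nhds_of_eventually_within
    · have : Tendsto (fun x : ℝ => 1 - x^2) (nhds 1) (nhds (1 - 1^2)) := by
        exact (tendsto_const_nhds.sub ((continuous_pow 2).tendsto 1))
      simpa using this.mono_left nhdsWithin_le_nhds
    · filter_upwards [self_mem_nhdsWithin,
        eventually_nhdsWithin_of_eventually_nhds (eventually_gt_nhds (by norm_num : (0:ℝ) < 1))]
        with x hx1 hx0
      have hxlt : x < 1 := hx1
      have : x^2 < 1 := by nlinarith
      simpa using this
  -- t ^ ((b-1)/2) → ∞ as t → 0⁺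
  have h2 : Tendsto (fun t : ℝ => t ^ ((b-1)/2)) (nhdsWithin 0 (Ioi 0)) atTop := by
    have he : 0 < (1-b)/2 := by linarith
    have := (tendsto_rpow_atTop he).comp tendsto_inv_nhdsGT_zero
    refine this.congr' ?_
    filter_upwards [self_mem_nhdsWithin] with t ht
    have ht' : (0:ℝ) < t := ht
    simp only [Function.comp]
    rw [Real.inv_rpow ht'.le, ← Real.rpow_neg ht'.le]
    ring_nf
  -- assemble
  have hg : Tendsto (fun x : ℝ => |C|/2 * (1 - x^2) ^ ((b-1)/2))
      (nhdsWithin 1 (Iio 1)) atTop :=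
    (h2.comp h1).const_mul_atTop (by positivity)
  refine tendsto_atTop_mono' _ ?_ hg
  filter_upwards [self_mem_nhdsWithin,
    eventually_nhdsWithin_of_eventually_nhds
      (eventually_gt_nhds (by norm_num : (1:ℝ)/2 < 1))] with x hx1 hxh
  have hxlt : x < 1 := hx1
  have hx0 : 0 < x := lt_trans (by norm_num) hxh
  have hy0 : 0 < x^2 := by positivity
  have hy1 : x^2 < 1 := by nlinarith
  have hr : 0 < (1 - x^2) ^ ((b-1)/2) := Real.rpow_pos_of_pos (by linarith) _
  have ha : 0 < (1-b)/2 := by linarith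
  have hb' : 0 < b/2 := by linarith
  have hc : (0:ℝ) < 3/2 := by norm_num
  have hF : 1 ≤ twoF1 ((1-b)/2) (b/2) (3/2) (x^2) := one_le_twoF1 ha hb' hc hy0 hy1
  have habs : |C * x * (1 - x^2) ^ ((b-1)/2) * twoF1 ((1-b)/2) (b/2) (3/2) (x^2)|
      = |C| * x * (1 - x^2) ^ ((b-1)/2) * twoF1 ((1-b)/2) (b/2) (3/2) (x^2) := by
    rw [abs_mul, abs_mul, abs_mul, abs_of_pos hx0, abs_of_pos hr,
      abs_of_pos (lt_of_lt_of_le one_pos hF)]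
  rw [habs]
  calc |C|/2 * (1 - x^2) ^ ((b-1)/2) ≤ |C| * x * (1 - x^2) ^ ((b-1)/2) := by
        have hcx : |C|/2 ≤ |C| * x := by nlinarith
        exact mul_le_mul_of_nonneg_right hcx hr.le
    _ ≤ |C| * x * (1 - x^2) ^ ((b-1)/2) * twoF1 ((1-b)/2) (b/2) (3/2) (x^2) :=
        le_mul_of_one_le_right (by positivity) hF
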